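/- Every unit of the ring ℤ[√2] is of the form ±(1+√2)^n for some integer n. -/
import Mathlib

open Zsqrtd Pell

/-- The fundamental unit `1 + √2` of `ℤ[√2]`, with inverse `-1 + √2`. -/
def fundUnit : (ℤ√2)ˣ where
  val := ⟨1, 1⟩
  inv := ⟨-1, 1⟩
  val_inv := by ext <;> simp
  inv_val := by ext <;> simp

/-- The fundamental Pell solution (3,2) for d = 2. -/
def fund32 : Pell.Solution₁ 2 := Pell.Solution₁.mk 3 2 (by norm_num)

lemma fund32_isFund : Pell.IsFundamental fund32 := by
  refine ⟨by norm_num [fund32], by norm_num [fund32], ?_⟩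
  intro b hb
  have hp := b.prop
  have hy : b.y ≠ 0 := Pell.Solution₁.y_ne_zero_of_one_lt_x hb
  have hy2 : 0 < b.y ^ 2 := by positivity
  show (3 : ℤ) ≤ b.x
  by_contra hcon
  push_neg at hcon
  have hx2 : b.x = 2 := by omega
  rw [hx2] at hp
  have h3 : 2 * b.y ^ 2 = 3 := by linarith
  generalize b.y ^ 2 = k at h3
  omega

/-- Map from Pell solutions to units of ℤ√2. -/
def sol2units : Pell.Solution₁ 2 →* (ℤ√2)ˣ where
  toFun a := {
    val := (a : ℤ√2)
    inv := star (a : ℤ√2)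
    val_inv := by
      have h1 : ((a : ℤ√2).norm : ℤ√2) = (a : ℤ√2) * star (a : ℤ√2) :=
        Zsqrtd.norm_eq_mul_conj _
      rw [norm_eq_one_iff_mem_unitary.mpr a.2] at h1
      simpa using h1.symm
    inv_val := by
      have h1 : ((a : ℤ√2).norm : ℤ√2) = (a : ℤ√2) * star (a : ℤ√2) :=
        Zsqrtd.norm_eq_mul_conj _
      rw [norm_eq_one_iff_mem_unitary.mpr a.2] at h1
      rw [mul_comm] at h1
      simpa using h1.symm }
  map_one' := Units.ext rfl
  map_mul' a b := Units.ext rfl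

lemma sol2units_neg (a : Pell.Solution₁ 2) : sol2units (-a) = -(sol2units a) :=
  Units.ext rfl

lemma sol2units_fund32 : sol2units fund32 = fundUnit ^ (2 : ℤ) := by
  apply Units.ext
  show ((⟨3, 2⟩ : ℤ√2)) = _
  have h2 : fundUnit ^ (2 : ℤ) = fundUnit * fundUnit := by rw [zpow_two]
  rw [h2, Units.val_mul]
  ext <;> simp [fundUnit, Zsqrtd.re_mul, Zsqrtd.im_mul]

lemma norm_one_case (v : (ℤ√2)ˣ) (h : (v : ℤ√2).norm = 1) :
    ∃ n : ℤ, v = (fundUnit ^ (2 : ℤ)) ^ n ∨ v = -((fundUnit ^ (2 : ℤ)) ^ n) := by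
  set s : Pell.Solution₁ 2 := ⟨(v : ℤ√2), norm_eq_one_iff_mem_unitary.mp h⟩ with hs
  have hsv : sol2units s = v := Units.ext rfl
  obtain ⟨n, hn | hn⟩ := fund32_isFund.eq_zpow_or_neg_zpow s
  · refine ⟨n, Or.inl ?_⟩
    rw [← hsv, hn, map_zpow, sol2units_fund32]
  · refine ⟨n, Or.inr ?_⟩
    rw [← hsv, hn, sol2units_neg, map_zpow, sol2units_fund32]

/-- Every unit of `ℤ[√2]` is of the form `±(1 + √2)^n` for some integer `n`. -/
theorem units_of_Zsqrt2 (u : (ℤ√2)ˣ) :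
    ∃ n : ℤ, u = fundUnit ^ n ∨ u = -(fundUnit ^ n) := by
  have hn : (u : ℤ√2).norm = 1 ∨ (u : ℤ√2).norm = -1 :=
    Int.isUnit_iff.mp ((Zsqrtd.isUnit_iff_norm_isUnit (u : ℤ√2)).mp u.isUnit)
  rcases hn with h | h
  · obtain ⟨n, hn | hn⟩ := norm_one_case u h
    · exact ⟨2 * n, Or.inl (by rw [hn, zpow_mul])⟩
    · exact ⟨2 * n, Or.inr (by rw [hn, zpow_mul])⟩
  · have hfu : ((u * fundUnit : (ℤ√2)ˣ) : ℤ√2).norm = 1 := by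
      have hf : ((fundUnit : (ℤ√2)ˣ) : ℤ√2).norm = -1 := by
        simp [fundUnit, Zsqrtd.norm_def]
      rw [Units.val_mul, Zsqrtd.norm_mul, h, hf]
      norm_num
    obtain ⟨n, hn | hn⟩ := norm_one_case (u * fundUnit) hfu
    · refine ⟨2 * n - 1, Or.inl ?_⟩
      have hu : u = (fundUnit ^ (2 : ℤ)) ^ n * fundUnit⁻¹ := by
        rw [← hn]; group
      rw [hu]; group
    · refine ⟨2 * n - 1, Or.inr ?_⟩
      have hu : u = -((fundUnit ^ (2 : ℤ)) ^ n) * fundUnit⁻¹ := by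
        rw [← hn]; group
      rw [hu, neg_mul]
      congr 1
      group
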